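/- The potential V(σ) = e^σ − 1 − σ satisfies Chicone's criterion 6·V(σ)·V''(σ)² − 3·V'(σ)²·V''(σ) − 2·V(σ)·V'(σ)·V''(σ) > 0 for all σ ≠ 0. -/

import Mathlib

open Real

lemma aux_deriv (f : ℝ → ℝ)
    (hf : f = fun σ : ℝ => Real.exp (2*σ) + 4*Real.exp σ - 5 - 2*σ*(2*Real.exp σ + 1)) :
    ∀ σ : ℝ, HasDerivAt f (4 * Real.exp σ * (Real.sinh σ - σ)) σ := by
  intro σ
  have h1 : HasDerivAt (fun σ : ℝ => Real.exp (2*σ)) (Real.exp (2*σ) * 2) σ := by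
    simpa [Function.comp_def] using (Real.hasDerivAt_exp (2*σ)).comp σ ((hasDerivAt_id σ).const_mul 2)
  have h2 : HasDerivAt (fun σ : ℝ => 4*Real.exp σ) (4 * Real.exp σ) σ :=
    (Real.hasDerivAt_exp σ).const_mul 4
  have h3 : HasDerivAt (fun σ : ℝ => 2*σ*(2*Real.exp σ + 1))
      (2*(2*Real.exp σ + 1) + 2*σ*(2*Real.exp σ)) σ := by
    have := ((hasDerivAt_id σ).const_mul 2).mul
      (((Real.hasDerivAt_exp σ).const_mul 2).add_const 1)
    simpa [Pi.mul_def, mul_comm, mul_assoc, mul_left_comm] using this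
  have h := ((h1.add h2).sub_const 5).sub h3
  have heq : Real.exp (2*σ) * 2 + 4*Real.exp σ - (2*(2*Real.exp σ + 1) + 2*σ*(2*Real.exp σ))
      = 4 * Real.exp σ * (Real.sinh σ - σ) := by
    rw [Real.sinh_eq, Real.exp_neg, two_mul, Real.exp_add]
    have := Real.exp_pos σ
    field_simp
    ring
  rw [hf]
  exact heq ▸ h

lemma aux_key : ∀ σ : ℝ, σ ≠ 0 →
    0 < Real.exp (2*σ) + 4*Real.exp σ - 5 - 2*σ*(2*Real.exp σ + 1) := by
  set f : ℝ → ℝ := fun σ => Real.exp (2*σ) + 4*Real.exp σ - 5 - 2*σ*(2*Real.exp σ + 1) with hf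
  have hd := aux_deriv f hf
  have hf0 : f 0 = 0 := by norm_num [hf]
  have hderiv : ∀ σ, deriv f σ = 4 * Real.exp σ * (Real.sinh σ - σ) :=
    fun σ => (hd σ).deriv
  have hcont : Continuous f := by
    have : Differentiable ℝ f := fun σ => (hd σ).differentiableAt
    exact this.continuous
  intro σ hσ
  rcases lt_or_gt_of_ne hσ with h | h
  · have hanti : StrictAntiOn f (Set.Iic 0) := by
      apply strictAntiOn_of_deriv_neg (convex_Iic 0) hcont.continuousOn
      intro x hx
      rw [interior_Iic] at hx
      rw [hderiv]
      have : Real.sinh x - x < 0 := by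
        have := Real.sinh_lt_self_iff.mpr hx
        linarith
      have := Real.exp_pos x
      nlinarith
    have h2 : 0 < f σ := hf0 ▸ hanti (Set.mem_Iic.mpr h.le) (Set.mem_Iic.mpr le_rfl) h
    simpa [hf] using h2
  · have hmono : StrictMonoOn f (Set.Ici 0) := by
      apply strictMonoOn_of_deriv_pos (convex_Ici 0) hcont.continuousOn
      intro x hx
      rw [interior_Ici] at hx
      rw [hderiv]
      have : 0 < Real.sinh x - x := by
        have := Real.self_lt_sinh_iff.mpr hx
        linarith
      have := Real.exp_pos x
      nlinarith
    have h2 : 0 < f σ := hf0 ▸ hmono (Set.mem_Ici.mpr le_rfl) (Set.mem_Ici.mpr h.le) h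
    simpa [hf] using h2

/-- The potential V(σ) = e^σ − 1 − σ (with V' = e^σ − 1, V'' = e^σ) satisfies
Chicone's monotone-period criterion 6·V·V''² − 3·V'²·V'' − 2·V·V'·V'' > 0 for
all σ ≠ 0. -/
theorem stmt_7 :
    ∀ σ : ℝ, σ ≠ 0 →
      0 < 6 * (Real.exp σ - 1 - σ) * (Real.exp σ) ^ 2
          - 3 * (Real.exp σ - 1) ^ 2 * Real.exp σ
          - 2 * (Real.exp σ - 1 - σ) * (Real.exp σ - 1) * Real.exp σ := by
  intro σ hσ
  have hk := aux_key σ hσ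
  have hx : Real.exp (2*σ) = Real.exp σ ^ 2 := by
    rw [two_mul, Real.exp_add]; ring
  rw [hx] at hk
  nlinarith [Real.exp_pos σ, mul_pos (Real.exp_pos σ) hk]
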